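/- Fix z ∈ ℂ and define g : ℂ → ℂ by g(s) := ₁F₁((1−s)/2; 1/2; z²/4) = ∑_{n=0}^∞ (((1−s)/2)_n/((1/2)_n·n!))·(z²/4)ⁿ. Then g is differentiable at s = 1 and g′(1) = −(z²/4)·₂F₂(1,1;3/2,2;z²/4). -/

import Mathlib

open scoped Real
open MeasureTheory

/-- Rising factorial (Pochhammer symbol) `(a)_n`. -/
noncomputable def poch (a : ℂ) (n : ℕ) : ℂ := (ascPochhammer ℂ n).eval a

/-- Confluent hypergeometric function `₁F₁(a;c;w)`. -/
noncomputable def oneF1 (a c w : ℂ) : ℂ :=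
  ∑' n : ℕ, poch a n * w ^ n / (poch c n * n.factorial)

/-- The hypergeometric function `₂F₂(1,1;3/2,2;w)`. -/
noncomputable def twoF2 (w : ℂ) : ℂ :=
  ∑' n : ℕ, poch 1 n * poch 1 n * w ^ n / (poch (3/2) n * poch 2 n * n.factorial)

/-- The Riemann xi function `ξ(s) = (1/2) s (s-1) π^(-s/2) Γ(s/2) ζ(s)`. -/
noncomputable def xiR (s : ℂ) : ℂ :=
  (1 / 2) * s * (s - 1) * (π : ℂ) ^ (-s / 2) * Complex.Gamma (s / 2) * riemannZeta s

/-- The Riemann Xi function `Ξ(t) = ξ(1/2 + i t)`. -/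
noncomputable def XiR (t : ℂ) : ℂ := xiR (1 / 2 + Complex.I * t)

/-- `ρ(x,z,s) = x^(1/2-s) e^(-z²/8) ₁F₁((1-s)/2; 1/2; z²/4)`. -/
noncomputable def rhoF (x : ℝ) (z s : ℂ) : ℂ :=
  (x : ℂ) ^ ((1 : ℂ) / 2 - s) * Complex.exp (-z ^ 2 / 8) *
    oneF1 ((1 - s) / 2) (1 / 2) (z ^ 2 / 4)

/-- `∇(x,z,s) = ρ(x,z,s) + ρ(x,z,1-s)`. -/
noncomputable def nablaF (x : ℝ) (z s : ℂ) : ℂ := rhoF x z s + rhoF x z (1 - s)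

/-- The digamma function `ψ(x) = Γ'(x)/Γ(x)`. -/
noncomputable def digamma (x : ℝ) : ℝ := deriv Real.Gamma x / Real.Gamma x

/-- The modified Bessel function of order zero, `K₀(x) = ∫₀^∞ e^(-x cosh u) du`. -/
noncomputable def besselK0 (x : ℝ) : ℝ := ∫ u in Set.Ioi (0 : ℝ), Real.exp (-x * Real.cosh u)


noncomputable def Q (c : ℝ) (n : ℕ) : ℝ := ∏ i ∈ Finset.range n, (c + i)

lemma poch_eq_prod (a : ℂ) (n : ℕ) : poch a n = ∏ i ∈ Finset.range n, (a + i) := by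
  induction n with
  | zero => simp [poch]
  | succ n ih =>
      rw [poch, ascPochhammer_succ_eval, ← poch, ih, Finset.prod_range_succ]

lemma poch_zero (a : ℂ) : poch a 0 = 1 := by simp [poch]

lemma poch_succ (a : ℂ) (n : ℕ) : poch a (n + 1) = a * poch (a + 1) n := by
  rw [poch_eq_prod, poch_eq_prod, Finset.prod_range_succ']
  simp only [Nat.cast_zero, add_zero]
  rw [mul_comm]
  congr 1
  exact Finset.prod_congr rfl fun i _ => by push_cast; ring

lemma Q_pos {c : ℝ} (hc : 0 < c) (n : ℕ) : 0 < Q c n :=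
  Finset.prod_pos fun i _ => by positivity

lemma Q_succ (c : ℝ) (n : ℕ) : Q c (n + 1) = c * Q (c + 1) n := by
  rw [Q, Q, Finset.prod_range_succ']
  simp only [Nat.cast_zero, add_zero]
  rw [mul_comm]
  congr 1
  exact Finset.prod_congr rfl fun i _ => by push_cast; ring

lemma poch_ofReal (c : ℝ) (n : ℕ) : poch (c : ℂ) n = (Q c n : ℂ) := by
  rw [poch_eq_prod, Q]
  push_cast
  rfl

lemma poch_half (n : ℕ) : poch (1/2) n = ((Q (1/2) n : ℝ) : ℂ) := by
  rw [← poch_ofReal]; norm_num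

lemma poch_threehalf (n : ℕ) : poch (3/2) n = ((Q (3/2) n : ℝ) : ℂ) := by
  rw [← poch_ofReal]; norm_num

lemma poch_one_eval (n : ℕ) : poch 1 n = (n.factorial : ℂ) := by
  simp [poch]

lemma poch_two (n : ℕ) : poch 2 n = ((n+1).factorial : ℂ) := by
  have := factorial_mul_ascPochhammer ℂ 1 n
  simp only [Nat.factorial_one, Nat.cast_one, one_mul] at this
  rw [poch]
  norm_num at this ⊢
  rw [this, add_comm 1 n]

lemma poch_norm_le {a : ℂ} {c : ℝ} (h : ‖a‖ ≤ c) (n : ℕ) : ‖poch a n‖ ≤ Q c n := by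
  rw [poch_eq_prod, Q]
  calc ‖∏ i ∈ Finset.range n, (a + (i:ℂ))‖ = ∏ i ∈ Finset.range n, ‖a + (i:ℂ)‖ :=
        norm_prod _ _
    _ ≤ ∏ i ∈ Finset.range n, (c + i) := by
        refine Finset.prod_le_prod (fun i _ => norm_nonneg _) (fun i _ => ?_)
        calc ‖a + (i:ℂ)‖ ≤ ‖a‖ + ‖(i:ℂ)‖ := norm_add_le _ _
          _ ≤ c + i := by rw [Complex.norm_natCast]; linarith

set_option maxHeartbeats 1000000 in
theorem stmt16 (z : ℂ) :
    HasDerivAt (fun s : ℂ => oneF1 ((1 - s) / 2) (1 / 2) (z ^ 2 / 4))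
      (-(z ^ 2 / 4) * twoF2 (z ^ 2 / 4)) 1 := by
  set w : ℂ := z ^ 2 / 4 with hw
  set f : ℕ → ℂ → ℂ := fun n s => poch ((1 - s) / 2) n * w ^ n / (poch (1/2) n * n.factorial)
    with hf
  set G : ℕ → ℂ → ℂ := fun n s =>
    -(1/2) * poch ((1 - s) / 2 + 1) n * w ^ (n + 1) / (poch (1/2) (n + 1) * (n + 1).factorial)
    with hG
  set L : ℕ → ℂ := fun n =>
    -(1/2) * (n.factorial : ℂ) * w ^ (n + 1) / (poch (1/2) (n + 1) * (n + 1).factorial)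
    with hL
  have hg : ∀ s : ℂ, oneF1 ((1 - s) / 2) (1/2) w = ∑' n, f n s := by
    intro s
    simp only [hf, oneF1]
  -- bound on f
  have hfb : ∀ s : ℂ, ‖s - 1‖ ≤ 1 → ∀ n, ‖f n s‖ ≤ ‖w‖ ^ n / n.factorial := by
    intro s hs n
    have ha : ‖(1 - s)/2‖ ≤ 1/2 := by
      rw [norm_div, norm_sub_rev]
      have h2 : ‖(2:ℂ)‖ = 2 := by norm_num
      rw [h2]
      linarith
    have hQ := Q_pos (by norm_num : (0:ℝ) < 1/2) n
    calc ‖f n s‖ = ‖poch ((1-s)/2) n‖ * ‖w‖ ^ n / (Q (1/2) n * n.factorial) := by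
          simp only [hf, norm_div, norm_mul, norm_pow, poch_half, Complex.norm_natCast,
            Complex.norm_real, Real.norm_eq_abs, abs_of_pos hQ]
      _ ≤ Q (1/2) n * ‖w‖ ^ n / (Q (1/2) n * n.factorial) := by
          gcongr
          exact poch_norm_le ha n
      _ = ‖w‖ ^ n / n.factorial := by
          rw [mul_div_mul_left _ _ (ne_of_gt hQ)]
  have hsummable : ∀ s : ℂ, ‖s - 1‖ ≤ 1 → Summable (fun n => f n s) := fun s hs =>
    Summable.of_norm_bounded (Real.summable_pow_div_factorial ‖w‖) (hfb s hs)
  have hf0 : ∀ s : ℂ, f 0 s = 1 := by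
    intro s; simp [hf, poch_zero]
  have hg1 : (∑' n, f n 1) = 1 := by
    rw [tsum_eq_single 0]
    · exact hf0 1
    · intro n hn
      obtain ⟨m, rfl⟩ := Nat.exists_eq_succ_of_ne_zero hn
      have : ((1:ℂ) - 1)/2 = 0 := by norm_num
      simp [hf, poch_succ, this]
  -- slope formula
  have hslope : ∀ s : ℂ, s ≠ 1 → ‖s - 1‖ ≤ 1 →
      ((∑' n, f n s) - 1) * (s - 1)⁻¹ = ∑' n, G n s := by
    intro s hs hb
    rw [Summable.tsum_eq_zero_add (hsummable s hb), hf0, add_sub_cancel_left, ← tsum_mul_right]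
    refine tsum_congr fun n => ?_
    have h1 : s - 1 ≠ 0 := sub_ne_zero.mpr hs
    have hkey : ((1 - s)/2) * (s - 1)⁻¹ = -(1/2) := by
      field_simp
      ring
    simp only [hf, hG]
    rw [poch_succ ((1 - s)/2) n]
    linear_combination (poch ((1-s)/2 + 1) n * w ^ (n+1) /
      (poch (1/2) (n+1) * ((n+1).factorial : ℂ))) * hkey
  -- termwise limits
  have hcont : ∀ n : ℕ, Filter.Tendsto (fun s => G n s) (nhdsWithin 1 {(1:ℂ)}ᶜ) (nhds (L n)) := by
    intro n
    have c1 : Continuous fun s : ℂ => poch ((1 - s)/2 + 1) n := by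
      simp only [poch]
      exact (Polynomial.continuous _).comp (by continuity)
    have c2 : Continuous fun s : ℂ => G n s := by
      simp only [hG]
      exact ((continuous_const.mul c1).mul continuous_const).div_const _
    have ht : Filter.Tendsto (fun s => G n s) (nhdsWithin 1 {(1:ℂ)}ᶜ) (nhds (G n 1)) :=
      (c2.tendsto 1).mono_left nhdsWithin_le_nhds
    have hv : G n 1 = L n := by
      simp only [hG, hL]
      norm_num [poch_one_eval]
    rwa [hv] at ht
  -- bound on G
  have hGb : ∀ s : ℂ, ‖s - 1‖ ≤ 1 → ∀ n, ‖G n s‖ ≤ ‖w‖ ^ (n+1) / (n+1).factorial := by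
    intro s hs n
    have ha : ‖(1 - s)/2 + 1‖ ≤ 3/2 := by
      calc ‖(1 - s)/2 + 1‖ ≤ ‖(1 - s)/2‖ + ‖(1:ℂ)‖ := norm_add_le _ _
        _ ≤ 3/2 := by
            rw [norm_div, norm_sub_rev, norm_one]
            have h2 : ‖(2:ℂ)‖ = 2 := by norm_num
            rw [h2]
            linarith
    have hQ := Q_pos (by norm_num : (0:ℝ) < 3/2) n
    have hQhalf : Q (1/2) (n+1) = 1/2 * Q (3/2) n := by
      rw [Q_succ]; norm_num
    calc ‖G n s‖ = 1/2 * ‖poch ((1-s)/2 + 1) n‖ * ‖w‖ ^ (n+1)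
          / (1/2 * Q (3/2) n * (n+1).factorial) := by
          simp only [hG, norm_div, norm_mul, norm_pow, poch_half, Complex.norm_natCast,
            Complex.norm_real, Real.norm_eq_abs, hQhalf, norm_neg]
          rw [abs_of_pos hQ]
          norm_num
      _ ≤ 1/2 * Q (3/2) n * ‖w‖ ^ (n+1) / (1/2 * Q (3/2) n * (n+1).factorial) := by
          gcongr
          exact poch_norm_le ha n
      _ = ‖w‖ ^ (n+1) / (n+1).factorial := by
          rw [mul_div_mul_left _ _ (by positivity : (1/2 : ℝ) * Q (3/2) n ≠ 0)]
  -- final sum identity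
  have hfinal : (∑' n, L n) = -w * twoF2 w := by
    rw [twoF2, ← tsum_mul_left]
    refine tsum_congr fun n => ?_
    have hp : poch (3/2) n ≠ 0 := by
      rw [poch_threehalf]
      exact_mod_cast ne_of_gt (Q_pos (by norm_num : (0:ℝ) < 3/2) n)
    have h2 : poch (1/2) (n+1) = (1/2 : ℂ) * poch (3/2) n := by
      rw [poch_succ]; norm_num
    have hfn : (n.factorial : ℂ) ≠ 0 := Nat.cast_ne_zero.mpr n.factorial_ne_zero
    have hfn1 : ((n+1).factorial : ℂ) ≠ 0 := Nat.cast_ne_zero.mpr (n+1).factorial_ne_zero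
    simp only [hL]
    rw [h2, poch_one_eval, poch_two]
    field_simp
    ring
  -- assemble
  rw [hasDerivAt_iff_tendsto_slope]
  have hev1 : ∀ᶠ s : ℂ in nhdsWithin 1 {(1:ℂ)}ᶜ, ‖s - 1‖ ≤ 1 := by
    refine Filter.Eventually.filter_mono nhdsWithin_le_nhds ?_
    filter_upwards [Metric.closedBall_mem_nhds (1:ℂ) one_pos] with s hs
    simpa [Metric.mem_closedBall, dist_eq_norm] using hs
  have hev2 : ∀ᶠ s : ℂ in nhdsWithin 1 {(1:ℂ)}ᶜ, s ≠ 1 := by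
    filter_upwards [self_mem_nhdsWithin] with s hs using hs
  have hsum_bound : Summable (fun n : ℕ => ‖w‖ ^ (n+1) / (n+1).factorial) :=
    (summable_nat_add_iff 1).mpr (Real.summable_pow_div_factorial ‖w‖)
  have hT : Filter.Tendsto (fun s => ∑' n, G n s) (nhdsWithin 1 {(1:ℂ)}ᶜ) (nhds (∑' n, L n)) := by
    refine tendsto_tsum_of_dominated_convergence hsum_bound hcont ?_
    filter_upwards [hev1] with s hs n using hGb s hs n
  rw [hfinal] at hT
  refine hT.congr' ?_
  filter_upwards [hev1, hev2] with s hs1 hs2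
  rw [slope_def_field, hg, hg 1, hg1, div_eq_mul_inv, ← hslope s hs2 hs1]
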